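/- Assume the bipartite Bloch data of the context and that ρ is separable. Then for all real column vectors u ∈ ℝ^{p_1} and v ∈ ℝ^{p_2}, the block matrix [[u·v^T, u·(T^{(B)})^T], [T^{(A)}·v^T, T^{(AB)}]] satisfies ‖·‖_tr ≤ √( (‖u‖_F² + (d_A²−d_A)/κ_A)·(‖v‖_F² + (d_B²−d_B)/κ_B) ); in particular, when κ_A = κ_B = 2 this recovers Zhu, Zheng and Fei's separability criterion. -/

import Mathlib

open Matrix ComplexOrder
open scoped Kronecker

/-- The trace norm `‖A‖_tr = Tr((A†A)^{1/2})` of a complex matrix (the sum of its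
singular values). -/
noncomputable def traceNorm {m n : Type*} [Fintype m] [Fintype n] [DecidableEq n]
    (A : Matrix m n ℂ) : ℝ :=
  ((Matrix.posSemidef_conjTranspose_mul_self A).1.eigenvectorUnitary.1 *
    diagonal (((↑) : ℝ → ℂ) ∘ (√·) ∘ (Matrix.posSemidef_conjTranspose_mul_self A).1.eigenvalues) *
    (star (Matrix.posSemidef_conjTranspose_mul_self A).1.eigenvectorUnitary :
      Matrix n n ℂ)).trace.re

lemma traceNorm_eq_sum_sqrt {m n : Type*} [Fintype m] [Fintype n] [DecidableEq n]
    (A : Matrix m n ℂ) :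
    traceNorm A = ∑ k, Real.sqrt ((Matrix.posSemidef_conjTranspose_mul_self A).1.eigenvalues k) := by
  set hH := Matrix.posSemidef_conjTranspose_mul_self A
  rw [traceNorm, Matrix.trace_mul_cycle,
    (Matrix.mem_unitaryGroup_iff').mp hH.1.eigenvectorUnitary.2, Matrix.one_mul,
    Matrix.trace_diagonal]
  simp [Complex.ofReal_re]

lemma vecMulVec_mulVec' {m n : Type*} [Fintype n] (x : m → ℂ) (y : n → ℂ) (z : n → ℂ) :
    Matrix.vecMulVec x y *ᵥ z = (y ⬝ᵥ z) • x := by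
  ext a
  simp [Matrix.mulVec, Matrix.vecMulVec_apply, dotProduct, Finset.mul_sum, mul_comm,
    mul_assoc, mul_left_comm]

lemma cs_sqrt {ι : Type*} (s : Finset ι) (a b : ι → ℝ) (ha : ∀ i ∈ s, 0 ≤ a i)
    (hb : ∀ i ∈ s, 0 ≤ b i) :
    ∑ i ∈ s, a i * b i ≤ Real.sqrt (∑ i ∈ s, a i ^ 2) * Real.sqrt (∑ i ∈ s, b i ^ 2) := by
  have h := Finset.sum_mul_sq_le_sq_mul_sq s a b
  have h0 : 0 ≤ ∑ i ∈ s, a i * b i := Finset.sum_nonneg fun i hi => mul_nonneg (ha i hi) (hb i hi)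
  calc ∑ i ∈ s, a i * b i = Real.sqrt ((∑ i ∈ s, a i * b i) ^ 2) := (Real.sqrt_sq h0).symm
    _ ≤ Real.sqrt ((∑ i ∈ s, a i ^ 2) * ∑ i ∈ s, b i ^ 2) := Real.sqrt_le_sqrt h
    _ = _ := Real.sqrt_mul (Finset.sum_nonneg fun i _ => sq_nonneg _) _

lemma traceNorm_sum_vecMulVec_le {m n ι : Type*} [Fintype m] [Fintype n] [Fintype ι]
    [DecidableEq n] (x : ι → m → ℂ) (y : ι → n → ℂ) :
    traceNorm (∑ i, Matrix.vecMulVec (x i) (y i)) ≤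
      ∑ i, Real.sqrt (∑ a, ‖x i a‖ ^ 2) * Real.sqrt (∑ b, ‖y i b‖ ^ 2) := by
  classical
  set A := ∑ i, Matrix.vecMulVec (x i) (y i) with hA
  set hH := Matrix.posSemidef_conjTranspose_mul_self A with hHdef
  set μ : n → ℝ := hH.1.eigenvalues with hμdef
  have hμ : ∀ k, 0 ≤ μ k := hH.eigenvalues_nonneg
  set v : n → n → ℂ := fun k => hH.1.eigenvectorBasis k with hvdef
  have hval : ∀ k, (Aᴴ * A) *ᵥ (v k) = μ k • (v k) := fun k =>
    hH.1.mulVec_eigenvectorBasis k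
  have horth : ∀ k l, star (v k) ⬝ᵥ (v l) = if k = l then 1 else 0 := fun k l =>
    by rw [dotProduct_comm]; exact orthonormal_iff_ite.mp (hH.1.eigenvectorBasis).orthonormal k l
  have key : ∀ k l, star (A *ᵥ v k) ⬝ᵥ (A *ᵥ v l) = if k = l then (μ k : ℂ) else 0 := by
    intro k l
    rw [Matrix.star_mulVec, ← Matrix.dotProduct_mulVec, Matrix.mulVec_mulVec, hval,
      dotProduct_smul, horth]
    by_cases h : k = l <;> simp [h, Complex.real_smul]
  set u : n → m → ℂ := fun k => ((Real.sqrt (μ k) : ℂ))⁻¹ • (A *ᵥ v k) with hudef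
  have hsqrtC : ∀ k, μ k ≠ 0 → (μ k : ℂ) = (Real.sqrt (μ k) : ℂ) * (Real.sqrt (μ k) : ℂ) := by
    intro k hk
    rw [← Complex.ofReal_mul, Real.mul_self_sqrt (hμ k)]
  have hsqrt_ne : ∀ k, μ k ≠ 0 → (Real.sqrt (μ k) : ℂ) ≠ 0 := by
    intro k hk
    simp only [ne_eq, Complex.ofReal_eq_zero]
    exact Real.sqrt_ne_zero'.mpr (lt_of_le_of_ne (hμ k) (Ne.symm hk))
  have hu_orth : ∀ k l, μ k ≠ 0 → μ l ≠ 0 →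
      star (u k) ⬝ᵥ (u l) = if k = l then 1 else 0 := by
    intro k l hk hl
    simp only [hudef, star_smul, smul_dotProduct, dotProduct_smul, key,
      smul_eq_mul, star_inv₀, Complex.star_def, Complex.conj_ofReal]
    by_cases h : k = l
    · subst h
      simp only [if_pos rfl, if_true]
      rw [hsqrtC k hk]
      field_simp
      exact div_self (hsqrt_ne k hk)
    · simp [h]
  have hsv : ∀ k, μ k ≠ 0 → star (u k) ⬝ᵥ (A *ᵥ v k) = (Real.sqrt (μ k) : ℂ) := by
    intro k hk
    simp only [hudef, star_smul, smul_dotProduct, key, if_pos rfl, if_true, smul_eq_mul,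
      star_inv₀, Complex.star_def, Complex.conj_ofReal]
    rw [hsqrtC k hk]
    field_simp
  have hAv : ∀ z : n → ℂ, A *ᵥ z = ∑ i, ((y i) ⬝ᵥ z) • x i := by
    intro z
    ext a
    rw [hA]
    simp only [Matrix.mulVec, dotProduct, Matrix.sum_apply, Matrix.vecMulVec_apply,
      Finset.sum_apply, Finset.sum_mul, Pi.smul_apply, smul_eq_mul]
    rw [Finset.sum_comm]
    exact Finset.sum_congr rfl fun i _ => Finset.sum_congr rfl fun b _ => by ring
  set S : Finset n := Finset.univ.filter (fun k => μ k ≠ 0) with hSdef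
  have step1 : traceNorm A = ∑ k ∈ S, Real.sqrt (μ k) := by
    rw [traceNorm_eq_sum_sqrt]
    rw [hSdef]
    rw [Finset.sum_filter_of_ne]
    intro k _ hne
    intro h0
    apply hne
    rw [hμdef] at h0 ⊢
    rw [h0, Real.sqrt_zero]
  have step2 : ∀ k ∈ S, Real.sqrt (μ k) =
      ∑ i, ((y i ⬝ᵥ v k) * (star (u k) ⬝ᵥ x i)).re := by
    intro k hk
    have hk' : μ k ≠ 0 := (Finset.mem_filter.mp hk).2
    have : (Real.sqrt (μ k) : ℂ) = ∑ i, (y i ⬝ᵥ v k) * (star (u k) ⬝ᵥ x i) := by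
      rw [← hsv k hk', hAv (v k)]
      simp only [dotProduct, Finset.sum_apply, Pi.smul_apply, smul_eq_mul,
        Finset.mul_sum]
      rw [Finset.sum_comm]
      exact Finset.sum_congr rfl fun i _ => Finset.sum_congr rfl fun a _ => by ring
    calc Real.sqrt (μ k) = ((Real.sqrt (μ k) : ℂ)).re := (Complex.ofReal_re _).symm
      _ = _ := by rw [this, Complex.re_sum]
  have step3 : traceNorm A ≤ ∑ i, ∑ k ∈ S, ‖y i ⬝ᵥ v k‖ * ‖star (u k) ⬝ᵥ x i‖ := by
    rw [step1]
    have h1 : ∑ k ∈ S, Real.sqrt (μ k)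
        ≤ ∑ k ∈ S, ∑ i, ‖y i ⬝ᵥ v k‖ * ‖star (u k) ⬝ᵥ x i‖ := by
      refine Finset.sum_le_sum fun k hk => ?_
      rw [step2 k hk]
      refine Finset.sum_le_sum fun i _ => ?_
      calc ((y i ⬝ᵥ v k) * (star (u k) ⬝ᵥ x i)).re
          ≤ ‖(y i ⬝ᵥ v k) * (star (u k) ⬝ᵥ x i)‖ := Complex.re_le_norm _
        _ = _ := norm_mul _ _
    exact h1.trans (le_of_eq Finset.sum_comm)
  -- Bessel bounds
  have bessel_y : ∀ i, ∑ k ∈ S, ‖y i ⬝ᵥ v k‖ ^ 2 ≤ ∑ b, ‖y i b‖ ^ 2 := by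
    intro i
    have h1 : ∑ k ∈ S, ‖y i ⬝ᵥ v k‖ ^ 2 ≤ ∑ k, ‖y i ⬝ᵥ v k‖ ^ 2 :=
      Finset.sum_le_sum_of_subset_of_nonneg (Finset.filter_subset _ _)
        fun _ _ _ => sq_nonneg _
    refine h1.trans ?_
    have hb := (hH.1.eigenvectorBasis).orthonormal.sum_inner_products_le
      (s := Finset.univ) ((WithLp.equiv 2 _).symm (star (y i)))
    have heq : ∀ k, (inner ℂ (hH.1.eigenvectorBasis k)
        ((WithLp.equiv 2 (n → ℂ)).symm (star (y i))) : ℂ) = star (y i ⬝ᵥ v k) := by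
      intro k
      rw [EuclideanSpace.inner_eq_star_dotProduct]
      simp [dotProduct, star_sum, mul_comm, hvdef]
    rw [Finset.sum_congr rfl (fun k _ => by rw [heq k, norm_star])] at hb
    refine hb.trans ?_
    rw [EuclideanSpace.norm_eq, Real.sq_sqrt (Finset.sum_nonneg fun _ _ => sq_nonneg _)]
    apply le_of_eq
    exact Finset.sum_congr rfl fun b _ => by simp
  have bessel_x : ∀ i, ∑ k ∈ S, ‖star (u k) ⬝ᵥ x i‖ ^ 2 ≤ ∑ a, ‖x i a‖ ^ 2 := by
    intro i
    have hU : Orthonormal ℂ (fun k : {k // μ k ≠ 0} =>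
        (WithLp.equiv 2 (m → ℂ)).symm (u k.1)) := by
      rw [orthonormal_iff_ite]
      intro k l
      rw [WithLp.equiv_symm_apply, EuclideanSpace.inner_toLp_toLp, dotProduct_comm, hu_orth k.1 l.1 k.2 l.2]
      by_cases h : k = l
      · simp [h]
      · rw [if_neg h, if_neg (fun hh => h (Subtype.ext hh))]
    have hb := hU.sum_inner_products_le (s := Finset.univ)
      ((WithLp.equiv 2 (m → ℂ)).symm (x i))
    have heq : ∀ k : {k // μ k ≠ 0}, (inner ℂ ((WithLp.equiv 2 (m → ℂ)).symm (u k.1))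
        ((WithLp.equiv 2 (m → ℂ)).symm (x i)) : ℂ) = star (u k.1) ⬝ᵥ x i := fun k =>
      by rw [WithLp.equiv_symm_apply, EuclideanSpace.inner_toLp_toLp, dotProduct_comm]
    rw [Finset.sum_congr rfl (fun k _ => by rw [heq k])] at hb
    have htrans : ∑ k ∈ S, ‖star (u k) ⬝ᵥ x i‖ ^ 2
        = ∑ k : {k // μ k ≠ 0}, ‖star (u k.1) ⬝ᵥ x i‖ ^ 2 := by
      rw [hSdef, ← Finset.sum_subtype_eq_sum_filter, Finset.subtype_univ]
    rw [htrans]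
    refine hb.trans ?_
    rw [EuclideanSpace.norm_eq, Real.sq_sqrt (Finset.sum_nonneg fun _ _ => sq_nonneg _)]
    apply le_of_eq
    exact Finset.sum_congr rfl fun a _ => by simp
  refine step3.trans (Finset.sum_le_sum fun i _ => ?_)
  calc ∑ k ∈ S, ‖y i ⬝ᵥ v k‖ * ‖star (u k) ⬝ᵥ x i‖
      ≤ Real.sqrt (∑ k ∈ S, ‖y i ⬝ᵥ v k‖ ^ 2) * Real.sqrt (∑ k ∈ S, ‖star (u k) ⬝ᵥ x i‖ ^ 2) :=
        cs_sqrt _ _ _ (fun _ _ => norm_nonneg _) (fun _ _ => norm_nonneg _)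
    _ ≤ Real.sqrt (∑ b, ‖y i b‖ ^ 2) * Real.sqrt (∑ a, ‖x i a‖ ^ 2) :=
        mul_le_mul (Real.sqrt_le_sqrt (bessel_y i)) (Real.sqrt_le_sqrt (bessel_x i))
          (Real.sqrt_nonneg _) (Real.sqrt_nonneg _)
    _ = _ := mul_comm _ _

lemma inner_flatten {d : ℕ} (X Y : Matrix (Fin d) (Fin d) ℂ) :
    (inner ℂ ((WithLp.equiv 2 (Fin d × Fin d → ℂ)).symm (fun p => X p.1 p.2))
      ((WithLp.equiv 2 (Fin d × Fin d → ℂ)).symm (fun p => Y p.1 p.2)) : ℂ)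
      = (Xᴴ * Y).trace := by
  rw [WithLp.equiv_symm_apply, EuclideanSpace.inner_toLp_toLp, dotProduct_comm]
  simp only [Matrix.trace, Matrix.diag, Matrix.mul_apply, Matrix.conjTranspose_apply,
    dotProduct, Pi.star_apply]
  rw [← Finset.sum_product']
  exact Fintype.sum_equiv (Equiv.prodComm _ _) _ _ fun x => rfl

lemma bloch_norm_bound {d p : ℕ} (hd : 1 ≤ d) {κ : ℝ} (hκ : 0 < κ)
    (G : Fin p → Matrix (Fin d) (Fin d) ℂ) (hGtr : ∀ i, (G i).trace = 0)
    (hGorth : ∀ i j, ((G i)ᴴ * G j).trace = if i = j then (κ : ℂ) else 0)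
    (σ : Matrix (Fin d) (Fin d) ℂ) (hσ : σ.PosSemidef) (hσtr : σ.trace = 1)
    (hσ2 : σ * σ = σ) :
    ∑ k, ‖((G k)ᴴ * σ).trace‖ ^ 2 ≤ κ * (1 - 1 / d) := by
  classical
  have hdC : (d : ℂ) ≠ 0 := Nat.cast_ne_zero.mpr (by omega)
  have hκC : (κ : ℂ) ≠ 0 := Complex.ofReal_ne_zero.mpr (ne_of_gt hκ)
  set δ : Matrix (Fin d) (Fin d) ℂ := σ - ((d : ℂ))⁻¹ • 1 with hδdef
  have hσH : σᴴ = σ := hσ.1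
  have hδH : δᴴ = δ := by
    simp [hδdef, Matrix.conjTranspose_sub, Matrix.conjTranspose_smul, hσH, star_inv₀]
  have hδtr : (δᴴ * δ).trace = 1 - (d : ℂ)⁻¹ := by
    rw [hδH, hδdef]
    simp only [Matrix.sub_mul, Matrix.mul_sub, Matrix.smul_mul, Matrix.mul_smul,
      Matrix.one_mul, Matrix.mul_one, hσ2, Matrix.trace_sub, Matrix.trace_smul, hσtr,
      Matrix.trace_one, smul_eq_mul, mul_one, Fintype.card_fin]
    rw [inv_mul_cancel₀ hdC]
    ring
  have hGδ : ∀ k, ((G k)ᴴ * δ).trace = ((G k)ᴴ * σ).trace := by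
    intro k
    rw [hδdef, Matrix.mul_sub, Matrix.trace_sub, Matrix.mul_smul, Matrix.trace_smul,
      Matrix.mul_one, Matrix.trace_conjTranspose, hGtr, star_zero]
    simp
  -- orthonormal family
  set e : Matrix (Fin d) (Fin d) ℂ → EuclideanSpace ℂ (Fin d × Fin d) :=
    fun X => (WithLp.equiv 2 (Fin d × Fin d → ℂ)).symm (fun p => X p.1 p.2) with hedef
  have he_inner : ∀ X Y, (inner ℂ (e X) (e Y) : ℂ) = (Xᴴ * Y).trace := fun X Y =>
    inner_flatten X Y
  have hsqκ : (Real.sqrt κ : ℂ) * (Real.sqrt κ : ℂ) = (κ : ℂ) := by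
    rw [← Complex.ofReal_mul, Real.mul_self_sqrt hκ.le]
  have hsqκ_ne : (Real.sqrt κ : ℂ) ≠ 0 :=
    Complex.ofReal_ne_zero.mpr (Real.sqrt_ne_zero'.mpr hκ)
  set g : Fin p → EuclideanSpace ℂ (Fin d × Fin d) :=
    fun k => ((Real.sqrt κ : ℂ))⁻¹ • e (G k) with hgdef
  have hg : Orthonormal ℂ g := by
    rw [orthonormal_iff_ite]
    intro k l
    rw [hgdef]
    simp only [inner_smul_left, inner_smul_right, he_inner, hGorth, map_inv₀,
      Complex.conj_ofReal]
    by_cases h : k = l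
    · simp only [h, if_pos rfl, if_true]
      rw [← hsqκ]
      field_simp
    · simp [h]
  have hb := hg.sum_inner_products_le (s := Finset.univ) (e δ)
  have hinner : ∀ k, (inner ℂ (g k) (e δ) : ℂ) = ((Real.sqrt κ : ℂ))⁻¹ * ((G k)ᴴ * σ).trace := by
    intro k
    rw [hgdef]
    simp only [inner_smul_left, he_inner, hGδ, map_inv₀, Complex.conj_ofReal]
  have hnorm2 : ‖e δ‖ ^ 2 = 1 - 1 / d := by
    have h1 : ‖e δ‖ ^ 2 = (inner ℂ (e δ) (e δ) : ℂ).re := norm_sq_eq_re_inner (𝕜 := ℂ) (e δ)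
    rw [h1, he_inner, hδtr]
    have h2 : ((d : ℂ)⁻¹).re = 1 / d := by
      rw [← Complex.ofReal_natCast, ← Complex.ofReal_inv, Complex.ofReal_re, one_div]
    simp [Complex.sub_re, Complex.one_re, h2]
  calc ∑ k, ‖((G k)ᴴ * σ).trace‖ ^ 2
      = κ * ∑ k, ‖(inner ℂ (g k) (e δ) : ℂ)‖ ^ 2 := by
        rw [Finset.mul_sum]
        refine Finset.sum_congr rfl fun k _ => ?_
        rw [hinner k, norm_mul, mul_pow, norm_inv, Complex.norm_real,
          Real.norm_eq_abs, abs_of_nonneg (Real.sqrt_nonneg _), ← Real.sqrt_inv,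
          Real.sq_sqrt (inv_nonneg.mpr hκ.le)]
        field_simp
    _ ≤ κ * ‖e δ‖ ^ 2 := by
        exact mul_le_mul_of_nonneg_left hb hκ.le
    _ = κ * (1 - 1 / d) := by rw [hnorm2]

/-- (Unified form of Zhu–Zheng–Fei's criterion.) If the bipartite state
`ρ` is separable, then for all real vectors `u, v` the block matrix
`[[u vᵀ, u (T^{(B)})ᵀ], [T^{(A)} vᵀ, T^{(AB)}]]` has trace norm at most
`√((‖u‖_F² + (d_A²−d_A)/κ_A)·(‖v‖_F² + (d_B²−d_B)/κ_B))`. -/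
theorem stmt_4
    (dA dB : ℕ) (hdA : 1 ≤ dA) (hdB : 1 ≤ dB)
    (κA κB : ℝ) (hκA : 0 < κA) (hκB : 0 < κB)
    (GA : Fin (dA ^ 2 - 1) → Matrix (Fin dA) (Fin dA) ℂ)
    (GB : Fin (dB ^ 2 - 1) → Matrix (Fin dB) (Fin dB) ℂ)
    (hGAtr : ∀ i, (GA i).trace = 0)
    (hGAorth : ∀ i j, ((GA i)ᴴ * GA j).trace = if i = j then (κA : ℂ) else 0)
    (hGBtr : ∀ i, (GB i).trace = 0)
    (hGBorth : ∀ i j, ((GB i)ᴴ * GB j).trace = if i = j then (κB : ℂ) else 0)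
    (ρ : Matrix (Fin dA × Fin dB) (Fin dA × Fin dB) ℂ)
    (hρ : ρ.PosSemidef) (hρtr : ρ.trace = 1)
    (TA : Fin (dA ^ 2 - 1) → ℂ) (TB : Fin (dB ^ 2 - 1) → ℂ)
    (TAB : Matrix (Fin (dA ^ 2 - 1)) (Fin (dB ^ 2 - 1)) ℂ)
    (hrep : ρ = (((dA : ℂ) * dB))⁻¹ •
      ((1 : Matrix (Fin dA) (Fin dA) ℂ) ⊗ₖ (1 : Matrix (Fin dB) (Fin dB) ℂ)
        + ∑ i, TA i • (GA i ⊗ₖ (1 : Matrix (Fin dB) (Fin dB) ℂ))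
        + ∑ j, TB j • ((1 : Matrix (Fin dA) (Fin dA) ℂ) ⊗ₖ GB j)
        + ∑ i, ∑ j, TAB i j • (GA i ⊗ₖ GB j)))
    (hsep : ∃ (M : ℕ) (w : Fin M → ℝ)
        (σ : Fin M → Matrix (Fin dA) (Fin dA) ℂ)
        (τ : Fin M → Matrix (Fin dB) (Fin dB) ℂ),
      (∀ i, 0 ≤ w i) ∧ (∑ i, w i = 1) ∧
      (∀ i, (σ i).PosSemidef ∧ (σ i).trace = 1 ∧ σ i * σ i = σ i) ∧
      (∀ i, (τ i).PosSemidef ∧ (τ i).trace = 1 ∧ τ i * τ i = τ i) ∧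
      ρ = ∑ i, (w i : ℂ) • (σ i ⊗ₖ τ i))
    :
    ∀ (p₁ p₂ : ℕ) (u : Fin p₁ → ℝ) (v : Fin p₂ → ℝ),
      traceNorm (Matrix.fromBlocks
          (Matrix.of fun a b => ((u a * v b : ℝ) : ℂ))
          (Matrix.of fun (a : Fin p₁) (j : Fin (dB ^ 2 - 1)) => ((u a : ℝ) : ℂ) * TB j)
          (Matrix.of fun (i : Fin (dA ^ 2 - 1)) (b : Fin p₂) => TA i * ((v b : ℝ) : ℂ))
          TAB)
        ≤ Real.sqrt ((∑ a, u a ^ 2 + ((dA : ℝ) ^ 2 - dA) / κA) *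
            (∑ b, v b ^ 2 + ((dB : ℝ) ^ 2 - dB) / κB)) := by
  classical
  intro p₁ p₂ u v
  obtain ⟨M, w, σ, τ, hw0, hw1, hσ, hτ, hρs⟩ := hsep
  have hdAC : (dA : ℂ) ≠ 0 := Nat.cast_ne_zero.mpr (by omega)
  have hdBC : (dB : ℂ) ≠ 0 := Nat.cast_ne_zero.mpr (by omega)
  have hdAR : (dA : ℝ) ≠ 0 := Nat.cast_ne_zero.mpr (by omega)
  have hdBR : (dB : ℝ) ≠ 0 := Nat.cast_ne_zero.mpr (by omega)
  have hκAC : (κA : ℂ) ≠ 0 := Complex.ofReal_ne_zero.mpr (ne_of_gt hκA)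
  have hκBC : (κB : ℂ) ≠ 0 := Complex.ofReal_ne_zero.mpr (ne_of_gt hκB)
  set r : Fin M → Fin (dA ^ 2 - 1) → ℂ := fun t k => ((GA k)ᴴ * σ t).trace with hrdef
  set s : Fin M → Fin (dB ^ 2 - 1) → ℂ := fun t l => ((GB l)ᴴ * τ t).trace with hsdef
  have hw1C : ∑ t, (w t : ℂ) = 1 := by
    have := congrArg (fun x : ℝ => (x : ℂ)) hw1
    push_cast at this
    exact this
  have hsqw : ∀ t, (Real.sqrt (w t) : ℂ) * (Real.sqrt (w t) : ℂ) = (w t : ℂ) := by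
    intro t
    rw [← Complex.ofReal_mul, Real.mul_self_sqrt (hw0 t)]
  have hkron : ∀ (X P : Matrix (Fin dA) (Fin dA) ℂ) (Y Q : Matrix (Fin dB) (Fin dB) ℂ),
      ((X ⊗ₖ Y) * (P ⊗ₖ Q)).trace = (X * P).trace * (Y * Q).trace := by
    intro X P Y Q
    rw [← Matrix.mul_kronecker_mul, Matrix.trace_kronecker]
  have hGA0 : ∀ k, ((GA k)ᴴ).trace = 0 := fun k => by
    rw [Matrix.trace_conjTranspose, hGAtr, star_zero]
  have hGB0 : ∀ l, ((GB l)ᴴ).trace = 0 := fun l => by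
    rw [Matrix.trace_conjTranspose, hGBtr, star_zero]
  have hτtr : ∀ t, (τ t).trace = 1 := fun t => (hτ t).2.1
  have hσtr : ∀ t, (σ t).trace = 1 := fun t => (hσ t).2.1
  have hrhoL : ∀ (X : Matrix (Fin dA) (Fin dA) ℂ) (Y : Matrix (Fin dB) (Fin dB) ℂ),
      ((X ⊗ₖ Y) * ρ).trace = ((dA : ℂ) * (dB : ℂ))⁻¹ *
        (X.trace * Y.trace
          + (∑ i, TA i * ((X * GA i).trace * Y.trace))
          + (∑ j, TB j * (X.trace * (Y * GB j).trace))
          + ∑ i, ∑ j, TAB i j * ((X * GA i).trace * (Y * GB j).trace)) := by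
    intro X Y
    conv_lhs => rw [hrep]
    rw [Matrix.mul_smul, Matrix.trace_smul, smul_eq_mul]
    congr 1
    simp only [Matrix.mul_add, Matrix.mul_sum, Matrix.mul_smul, Matrix.trace_add,
      Matrix.trace_sum, Matrix.trace_smul, hkron, Matrix.mul_one, smul_eq_mul]
  have hrhoR : ∀ (X : Matrix (Fin dA) (Fin dA) ℂ) (Y : Matrix (Fin dB) (Fin dB) ℂ),
      ((X ⊗ₖ Y) * ρ).trace = ∑ t, (w t : ℂ) * ((X * σ t).trace * (Y * τ t).trace) := by
    intro X Y
    conv_lhs => rw [hρs]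
    rw [Matrix.mul_sum, Matrix.trace_sum]
    simp only [Matrix.mul_smul, Matrix.trace_smul, hkron, smul_eq_mul]
  have hTA : ∀ k, TA k = (dA : ℂ) * (κA : ℂ)⁻¹ * ∑ t, (w t : ℂ) * r t k := by
    intro k
    have h := (hrhoL ((GA k)ᴴ) 1).symm.trans (hrhoR ((GA k)ᴴ) 1)
    simp only [hGA0, Matrix.mul_one, Matrix.one_mul, Matrix.trace_one, hGAorth, hGBtr,
      hτtr, Fintype.card_fin, zero_mul, mul_zero, Finset.sum_const_zero, add_zero,
      zero_add, mul_ite, ite_mul, mul_one, Finset.sum_ite_eq, Finset.mem_univ, if_true,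
      ← hrdef] at h
    field_simp at h ⊢
    have h2 : (TA k * (κA : ℂ)) * (dB : ℂ)
        = (((∑ t, (w t : ℂ) * ((GA k)ᴴ * σ t).trace)) * (dA : ℂ)) * (dB : ℂ) := by
      linear_combination (dB : ℂ) * h
    have h3 := mul_right_cancel₀ hdBC h2
    linear_combination h3
  have hTB : ∀ l, TB l = (dB : ℂ) * (κB : ℂ)⁻¹ * ∑ t, (w t : ℂ) * s t l := by
    intro l
    have h := (hrhoL 1 ((GB l)ᴴ)).symm.trans (hrhoR 1 ((GB l)ᴴ))
    simp only [hGB0, Matrix.mul_one, Matrix.one_mul, Matrix.trace_one, hGBorth, hGAtr,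
      hσtr, Fintype.card_fin, zero_mul, mul_zero, Finset.sum_const_zero, add_zero,
      zero_add, mul_ite, ite_mul, mul_one, Finset.sum_ite_eq, Finset.mem_univ, if_true,
      ← hsdef] at h
    field_simp at h ⊢
    have h2 : (TB l * (κB : ℂ)) * (dA : ℂ)
        = (((∑ t, (w t : ℂ) * ((GB l)ᴴ * τ t).trace)) * (dB : ℂ)) * (dA : ℂ) := by
      linear_combination (dA : ℂ) * h
    have h3 := mul_right_cancel₀ hdAC h2
    linear_combination h3
  have hTAB : ∀ k l, TAB k l =
      (dA : ℂ) * (dB : ℂ) * ((κA : ℂ) * (κB : ℂ))⁻¹ * ∑ t, (w t : ℂ) * (r t k * s t l) := by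
    intro k l
    have h := (hrhoL ((GA k)ᴴ) ((GB l)ᴴ)).symm.trans (hrhoR ((GA k)ᴴ) ((GB l)ᴴ))
    simp only [hGA0, hGB0, Matrix.mul_one, Matrix.one_mul, hGAorth, hGBorth,
      zero_mul, mul_zero, Finset.sum_const_zero, add_zero, zero_add, mul_ite, ite_mul,
      mul_one, Finset.sum_ite_eq, Finset.mem_univ, if_true, ← hrdef, ← hsdef] at h
    field_simp at h ⊢
    linear_combination h
  -- pure-state Bloch vector norm bounds
  have hrb : ∀ t, ∑ k, ‖r t k‖ ^ 2 ≤ κA * (1 - 1 / dA) := fun t =>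
    bloch_norm_bound hdA hκA GA hGAtr hGAorth (σ t) (hσ t).1 (hσ t).2.1 (hσ t).2.2
  have hsb : ∀ t, ∑ l, ‖s t l‖ ^ 2 ≤ κB * (1 - 1 / dB) := fun t =>
    bloch_norm_bound hdB hκB GB hGBtr hGBorth (τ t) (hτ t).1 (hτ t).2.1 (hτ t).2.2
  -- rank-one decomposition vectors
  set Xv : Fin M → (Fin p₁ ⊕ Fin (dA ^ 2 - 1)) → ℂ := fun t => Sum.elim
    (fun a => ((Real.sqrt (w t) * u a : ℝ) : ℂ))
    (fun k => ((Real.sqrt (w t) * ((dA : ℝ) / κA) : ℝ) : ℂ) * r t k) with hXvdef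
  set Yv : Fin M → (Fin p₂ ⊕ Fin (dB ^ 2 - 1)) → ℂ := fun t => Sum.elim
    (fun b => ((Real.sqrt (w t) * v b : ℝ) : ℂ))
    (fun l => ((Real.sqrt (w t) * ((dB : ℝ) / κB) : ℝ) : ℂ) * s t l) with hYvdef
  have hM : (Matrix.fromBlocks
      (Matrix.of fun a b => ((u a * v b : ℝ) : ℂ))
      (Matrix.of fun (a : Fin p₁) (j : Fin (dB ^ 2 - 1)) => ((u a : ℝ) : ℂ) * TB j)
      (Matrix.of fun (i : Fin (dA ^ 2 - 1)) (b : Fin p₂) => TA i * ((v b : ℝ) : ℂ))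
      TAB) = ∑ t, Matrix.vecMulVec (Xv t) (Yv t) := by
    ext i j
    rw [Matrix.sum_apply]
    cases i with
    | inl a =>
      cases j with
      | inl b =>
        simp only [Matrix.fromBlocks_apply₁₁, Matrix.of_apply, Matrix.vecMulVec_apply,
          hXvdef, hYvdef, Sum.elim_inl]
        push_cast
        have : ∀ t : Fin M, ((Real.sqrt (w t) : ℂ) * (u a : ℂ)) * ((Real.sqrt (w t) : ℂ) * (v b : ℂ))
            = (w t : ℂ) * ((u a : ℂ) * (v b : ℂ)) := fun t => by
          linear_combination ((u a : ℂ) * (v b : ℂ)) * hsqw t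
        rw [Finset.sum_congr rfl fun t _ => this t, ← Finset.sum_mul, hw1C, one_mul]
      | inr l =>
        simp only [Matrix.fromBlocks_apply₁₂, Matrix.of_apply, Matrix.vecMulVec_apply,
          hXvdef, hYvdef, Sum.elim_inl, Sum.elim_inr]
        rw [hTB l]
        push_cast
        have : ∀ t : Fin M, ((Real.sqrt (w t) : ℂ) * (u a : ℂ)) *
              ((Real.sqrt (w t) : ℂ) * ((dB : ℂ) / (κB : ℂ)) * s t l)
            = (u a : ℂ) * ((dB : ℂ) * (κB : ℂ)⁻¹ * ((w t : ℂ) * s t l)) := fun t => by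
          rw [div_eq_mul_inv]
          linear_combination ((u a : ℂ) * (dB : ℂ) * (κB : ℂ)⁻¹ * s t l) * hsqw t
        rw [Finset.sum_congr rfl fun t _ => this t, ← Finset.mul_sum, ← Finset.mul_sum]
    | inr k =>
      cases j with
      | inl b =>
        simp only [Matrix.fromBlocks_apply₂₁, Matrix.of_apply, Matrix.vecMulVec_apply,
          hXvdef, hYvdef, Sum.elim_inl, Sum.elim_inr]
        rw [hTA k]
        push_cast
        have : ∀ t : Fin M, ((Real.sqrt (w t) : ℂ) * ((dA : ℂ) / (κA : ℂ)) * r t k) *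
              ((Real.sqrt (w t) : ℂ) * (v b : ℂ))
            = ((dA : ℂ) * (κA : ℂ)⁻¹ * ((w t : ℂ) * r t k)) * (v b : ℂ) := fun t => by
          rw [div_eq_mul_inv]
          linear_combination ((v b : ℂ) * (dA : ℂ) * (κA : ℂ)⁻¹ * r t k) * hsqw t
        rw [Finset.sum_congr rfl fun t _ => this t, ← Finset.sum_mul, ← Finset.mul_sum]
      | inr l =>
        simp only [Matrix.fromBlocks_apply₂₂, Matrix.of_apply, Matrix.vecMulVec_apply,
          hXvdef, hYvdef, Sum.elim_inr]
        rw [hTAB k l]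
        push_cast
        have : ∀ t : Fin M, ((Real.sqrt (w t) : ℂ) * ((dA : ℂ) / (κA : ℂ)) * r t k) *
              ((Real.sqrt (w t) : ℂ) * ((dB : ℂ) / (κB : ℂ)) * s t l)
            = (dA : ℂ) * (dB : ℂ) * ((κA : ℂ) * (κB : ℂ))⁻¹ * ((w t : ℂ) * (r t k * s t l)) :=
          fun t => by
            rw [div_eq_mul_inv, div_eq_mul_inv, mul_inv]
            linear_combination ((dA : ℂ) * (dB : ℂ) * (κA : ℂ)⁻¹ * (κB : ℂ)⁻¹ * r t k * s t l)
              * hsqw t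
        rw [Finset.sum_congr rfl fun t _ => this t, ← Finset.mul_sum]
  -- norm bounds on the vectors
  set CA : ℝ := ∑ a, u a ^ 2 + ((dA : ℝ) ^ 2 - dA) / κA with hCAdef
  set CB : ℝ := ∑ b, v b ^ 2 + ((dB : ℝ) ^ 2 - dB) / κB with hCBdef
  have hXb : ∀ t, ∑ α, ‖Xv t α‖ ^ 2 ≤ w t * CA := by
    intro t
    rw [Fintype.sum_sum_type]
    have h1 : ∑ a, ‖Xv t (Sum.inl a)‖ ^ 2 = w t * ∑ a, u a ^ 2 := by
      rw [Finset.mul_sum]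
      refine Finset.sum_congr rfl fun a _ => ?_
      simp only [hXvdef, Sum.elim_inl, Complex.norm_real, Real.norm_eq_abs, sq_abs,
        mul_pow, Real.sq_sqrt (hw0 t)]
    have h2 : ∑ k, ‖Xv t (Sum.inr k)‖ ^ 2 ≤ w t * (((dA : ℝ) ^ 2 - dA) / κA) := by
      have he : ∀ k, ‖Xv t (Sum.inr k)‖ ^ 2
          = (w t * ((dA : ℝ) / κA) ^ 2) * ‖r t k‖ ^ 2 := by
        intro k
        simp only [hXvdef, Sum.elim_inr, norm_mul, Complex.norm_real, Real.norm_eq_abs]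
        rw [mul_pow, mul_pow, sq_abs, sq_abs, Real.sq_sqrt (hw0 t)]
      rw [Finset.sum_congr rfl fun k _ => he k, ← Finset.mul_sum]
      have := hrb t
      calc (w t * ((dA : ℝ) / κA) ^ 2) * ∑ k, ‖r t k‖ ^ 2
          ≤ (w t * ((dA : ℝ) / κA) ^ 2) * (κA * (1 - 1 / dA)) := by
            exact mul_le_mul_of_nonneg_left this
              (mul_nonneg (hw0 t) (sq_nonneg _))
        _ = w t * (((dA : ℝ) ^ 2 - dA) / κA) := by
            field_simp
      
    rw [h1]
    calc w t * ∑ a, u a ^ 2 + ∑ k, ‖Xv t (Sum.inr k)‖ ^ 2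
        ≤ w t * ∑ a, u a ^ 2 + w t * (((dA : ℝ) ^ 2 - dA) / κA) := by linarith
      _ = w t * CA := by rw [hCAdef]; ring
  have hYb : ∀ t, ∑ β, ‖Yv t β‖ ^ 2 ≤ w t * CB := by
    intro t
    rw [Fintype.sum_sum_type]
    have h1 : ∑ b, ‖Yv t (Sum.inl b)‖ ^ 2 = w t * ∑ b, v b ^ 2 := by
      rw [Finset.mul_sum]
      refine Finset.sum_congr rfl fun b _ => ?_
      simp only [hYvdef, Sum.elim_inl, Complex.norm_real, Real.norm_eq_abs, sq_abs,
        mul_pow, Real.sq_sqrt (hw0 t)]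
    have h2 : ∑ l, ‖Yv t (Sum.inr l)‖ ^ 2 ≤ w t * (((dB : ℝ) ^ 2 - dB) / κB) := by
      have he : ∀ l, ‖Yv t (Sum.inr l)‖ ^ 2
          = (w t * ((dB : ℝ) / κB) ^ 2) * ‖s t l‖ ^ 2 := by
        intro l
        simp only [hYvdef, Sum.elim_inr, norm_mul, Complex.norm_real, Real.norm_eq_abs]
        rw [mul_pow, mul_pow, sq_abs, sq_abs, Real.sq_sqrt (hw0 t)]
      rw [Finset.sum_congr rfl fun l _ => he l, ← Finset.mul_sum]
      have := hsb t
      calc (w t * ((dB : ℝ) / κB) ^ 2) * ∑ l, ‖s t l‖ ^ 2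
          ≤ (w t * ((dB : ℝ) / κB) ^ 2) * (κB * (1 - 1 / dB)) := by
            exact mul_le_mul_of_nonneg_left this
              (mul_nonneg (hw0 t) (sq_nonneg _))
        _ = w t * (((dB : ℝ) ^ 2 - dB) / κB) := by
            field_simp
    rw [h1]
    calc w t * ∑ b, v b ^ 2 + ∑ l, ‖Yv t (Sum.inr l)‖ ^ 2
        ≤ w t * ∑ b, v b ^ 2 + w t * (((dB : ℝ) ^ 2 - dB) / κB) := by linarith
      _ = w t * CB := by rw [hCBdef]; ring
  have hCA0 : 0 ≤ CA := by
    rw [hCAdef]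
    have h1 : (0 : ℝ) ≤ ∑ a, u a ^ 2 := Finset.sum_nonneg fun _ _ => sq_nonneg _
    have h2 : (dA : ℝ) ≤ (dA : ℝ) ^ 2 := by
      nlinarith [(Nat.one_le_cast (α := ℝ)).mpr hdA]
    have h3 : (0 : ℝ) ≤ ((dA : ℝ) ^ 2 - dA) / κA := div_nonneg (by linarith) hκA.le
    linarith
  have hCB0 : 0 ≤ CB := by
    rw [hCBdef]
    have h1 : (0 : ℝ) ≤ ∑ b, v b ^ 2 := Finset.sum_nonneg fun _ _ => sq_nonneg _
    have h2 : (dB : ℝ) ≤ (dB : ℝ) ^ 2 := by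
      nlinarith [(Nat.one_le_cast (α := ℝ)).mpr hdB]
    have h3 : (0 : ℝ) ≤ ((dB : ℝ) ^ 2 - dB) / κB := div_nonneg (by linarith) hκB.le
    linarith
  rw [hM]
  calc traceNorm (∑ t, Matrix.vecMulVec (Xv t) (Yv t))
      ≤ ∑ t, Real.sqrt (∑ α, ‖Xv t α‖ ^ 2) * Real.sqrt (∑ β, ‖Yv t β‖ ^ 2) :=
        traceNorm_sum_vecMulVec_le Xv Yv
    _ ≤ ∑ t, Real.sqrt (w t * CA) * Real.sqrt (w t * CB) := by
        refine Finset.sum_le_sum fun t _ => ?_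
        exact mul_le_mul (Real.sqrt_le_sqrt (hXb t)) (Real.sqrt_le_sqrt (hYb t))
          (Real.sqrt_nonneg _) (Real.sqrt_nonneg _)
    _ = ∑ t, w t * Real.sqrt (CA * CB) := by
        refine Finset.sum_congr rfl fun t _ => ?_
        rw [← Real.sqrt_mul (mul_nonneg (hw0 t) hCA0)]
        rw [show w t * CA * (w t * CB) = (w t * w t) * (CA * CB) by ring]
        rw [Real.sqrt_mul (mul_nonneg (hw0 t) (hw0 t)), Real.sqrt_mul_self (hw0 t)]
    _ = Real.sqrt (CA * CB) := by rw [← Finset.sum_mul, hw1, one_mul]
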